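/- Let $n \geq 3$ and let $S \subseteq \mathbb{Z}^3$ be the span of $v_1 = (\tfrac{n(n-1)}{2}, n, \tfrac{n(n+1)}{2})$, $v_2 = (n(n-1), 0, 0)$, $v_3 = (0, 2n, 0)$. Then $(1,0,1) \notin S$ whenever $n(n^2-1) > 2$; more precisely, if $m(1,0,1) \in S$ with $m > 0$ then $\tfrac{1}{2}n(n^2-1) \mid m$. -/

import Mathlib

theorem stmt18 (n : ℕ) (hn : 3 ≤ n) :
    (∀ m : ℤ, 0 < m →
        m • (![1, 0, 1] : Fin 3 → ℤ) ∈
          Submodule.span ℤ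
            ({![(n : ℤ) * (n - 1) / 2, (n : ℤ), (n : ℤ) * (n + 1) / 2],
              ![(n : ℤ) * (n - 1), 0, 0],
              ![0, 2 * (n : ℤ), 0]} : Set (Fin 3 → ℤ)) →
        ((n : ℤ) * (n ^ 2 - 1) / 2) ∣ m) ∧
      (2 < n * (n ^ 2 - 1) →
        (![1, 0, 1] : Fin 3 → ℤ) ∉
          Submodule.span ℤ
            ({![(n : ℤ) * (n - 1) / 2, (n : ℤ), (n : ℤ) * (n + 1) / 2],
              ![(n : ℤ) * (n - 1), 0, 0],
              ![0, 2 * (n : ℤ), 0]} : Set (Fin 3 → ℤ))) := by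
  have hn3 : (3 : ℤ) ≤ (n : ℤ) := by exact_mod_cast hn
  have hevA : (2 : ℤ) ∣ (n : ℤ) * (n - 1) := by
    rcases Int.even_mul_succ_self ((n : ℤ) - 1) with ⟨k, hk⟩
    exact ⟨k, by linarith⟩
  have hevB : (2 : ℤ) ∣ (n : ℤ) * (n + 1) := (Int.even_mul_succ_self (n : ℤ)).two_dvd
  have hevD : (2 : ℤ) ∣ (n : ℤ) * ((n : ℤ) ^ 2 - 1) := by
    have := hevA.mul_right ((n : ℤ) + 1)
    convert this using 1
    · rfl
    ring
  have hA2 : 2 * ((n : ℤ) * (n - 1) / 2) = (n : ℤ) * (n - 1) := Int.mul_ediv_cancel' hevA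
  have hB2 : 2 * ((n : ℤ) * (n + 1) / 2) = (n : ℤ) * (n + 1) := Int.mul_ediv_cancel' hevB
  have hD2 : 2 * ((n : ℤ) * ((n : ℤ) ^ 2 - 1) / 2) = (n : ℤ) * ((n : ℤ) ^ 2 - 1) :=
    Int.mul_ediv_cancel' hevD
  have key : ∀ m : ℤ, 0 < m →
      m • (![1, 0, 1] : Fin 3 → ℤ) ∈
        Submodule.span ℤ
          ({![(n : ℤ) * (n - 1) / 2, (n : ℤ), (n : ℤ) * (n + 1) / 2],
            ![(n : ℤ) * (n - 1), 0, 0],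
            ![0, 2 * (n : ℤ), 0]} : Set (Fin 3 → ℤ)) →
      ((n : ℤ) * (n ^ 2 - 1) / 2) ∣ m := by
    intro m hm hmem
    rw [Submodule.mem_span_insert] at hmem
    obtain ⟨a, w, hw, hv⟩ := hmem
    rw [Submodule.mem_span_insert] at hw
    obtain ⟨b, u, hu, hw⟩ := hw
    rw [Submodule.mem_span_singleton] at hu
    obtain ⟨c, hu⟩ := hu
    subst hu hw
    have e0 := congrFun hv 0
    have e1 := congrFun hv 1
    have e2 := congrFun hv 2
    simp [Matrix.cons_val_zero, Matrix.cons_val_one, Matrix.head_cons] at e0 e1 e2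
    -- e0 : m = a * (n*(n-1)/2) + b * (n*(n-1))
    -- e1 : 0 = a * n + c * (2*n)
    -- e2 : m = a * (n*(n+1)/2)
    set A := (n : ℤ) * (n - 1) / 2 with hA
    set B := (n : ℤ) * (n + 1) / 2 with hB
    set D := (n : ℤ) * ((n : ℤ) ^ 2 - 1) / 2 with hD
    have hab : a = b * (n - 1) := by
      have h2 : 2 * m = a * (2 * A) + b * (2 * (n * (n - 1))) := by linarith
      have h3 : 2 * m = a * (2 * B) := by linarith
      rw [hA2] at h2
      rw [hB2] at h3
      have hne : (n : ℤ) * 2 ≠ 0 := by positivity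
      have h4 : a * ((n : ℤ) * 2) = (b * (n - 1)) * ((n : ℤ) * 2) := by
        linear_combination h2 - h3
      exact mul_right_cancel₀ hne h4
    refine ⟨b, ?_⟩
    have h3 : 2 * m = a * (2 * B) := by linarith
    rw [hB2, hab] at h3
    have : 2 * m = 2 * (D * b) := by
      linear_combination h3 - b * hD2
    linarith
  refine ⟨key, fun hbig hmem => ?_⟩
  have h1 : ((n : ℤ) * (n ^ 2 - 1) / 2) ∣ 1 := by
    apply key 1 one_pos
    simpa using hmem
  have hsq : 1 ≤ n ^ 2 := Nat.one_le_pow _ _ (by omega)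
  zify [hsq] at hbig
  have hDpos : 1 < (n : ℤ) * ((n : ℤ) ^ 2 - 1) / 2 := by
    linarith [hD2]
  have := Int.le_of_dvd one_pos h1
  linarith
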